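/- arXiv:2405.04519 — 4 statements merged into one kernel-verified Lean document; each statement's English description precedes it below -/
import Mathlib

section
/- Let G be a graph of maximum degree Δ ≥ 2 and fix a positive integer r. Suppose for some constant c = log₂(1 + 1/Δ^r)/(3r) and some x ≥ max(4r, x₀), every ball in G satisfies |N_{≤x+kr}(v)| ≤ 2^{c(x+kr)} for all k with 0 ≤ kr ≤ x. Then there exists α ∈ {x, x+1, …, 2x} such that |N_{≤α}(v)| ≥ Δ^r · |N_{=α+r}(v)|, where N_{≤d}(v) is the set of vertices at distance at most d from v and N_{=d}(v) the set at distance exactly d. -/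
/-- In a graph of max degree Δ ≥ 2, given the sub-exponential growth
bound for balls of radius x + kr (with c = log₂(1 + 1/Δ^r)/(3r) and x ≥ 4r),
there exists α ∈ [x, 2x] with |N_{≤α}(v)| ≥ Δ^r · |N_{=α+r}(v)|. -/
theorem stmt_0 {V : Type*} [Fintype V] [DecidableEq V]
    (G : SimpleGraph V) [DecidableRel G.Adj] (Δ r x : ℕ) (c : ℝ)
    (hΔ2 : 2 ≤ Δ) (hr : 0 < r)
    (hmax : ∀ v, G.degree v ≤ Δ)
    (hc : c = Real.logb 2 (1 + 1 / (Δ : ℝ) ^ r) / (3 * r))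
    (hx : 4 * r ≤ x)
    (v : V)
    (hgrowth : ∀ k : ℕ, k * r ≤ x →
      ((Finset.univ.filter (fun u => G.dist v u ≤ x + k * r)).card : ℝ)
        ≤ (2 : ℝ) ^ (c * ((x : ℝ) + (k : ℝ) * r))) :
    ∃ α, x ≤ α ∧ α ≤ 2 * x ∧
      Δ ^ r * (Finset.univ.filter (fun u => G.dist v u = α + r)).card
        ≤ (Finset.univ.filter (fun u => G.dist v u ≤ α)).card := by
  by_contra hcon
  push_neg at hcon
  set B : ℕ → ℕ := fun d => (Finset.univ.filter (fun u => G.dist v u ≤ d)).card with hB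
  set A : ℕ → ℕ := fun d => (Finset.univ.filter (fun u => G.dist v u = d)).card with hA
  have hDpos : (0:ℝ) < (Δ:ℝ)^r := by positivity
  set δ : ℝ := 1 / (Δ:ℝ)^r with hδ
  have hδpos : 0 < δ := by positivity
  have h1δ : (1:ℝ) < 1 + δ := by linarith
  have hδmul : δ * (Δ:ℝ)^r = 1 := by
    rw [hδ]; field_simp
  -- monotone disjoint union bound
  have hsum : ∀ α : ℕ, B α + A (α + r) ≤ B (α + r) := by
    intro α
    have hdisj : Disjoint (Finset.univ.filter (fun u => G.dist v u ≤ α))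
        (Finset.univ.filter (fun u => G.dist v u = α + r)) := by
      rw [Finset.disjoint_filter]
      intro u _ h1 h2
      omega
    calc B α + A (α + r)
        = ((Finset.univ.filter (fun u => G.dist v u ≤ α)) ∪
            (Finset.univ.filter (fun u => G.dist v u = α + r))).card :=
          (Finset.card_union_of_disjoint hdisj).symm
      _ ≤ B (α + r) := by
          apply Finset.card_le_card
          intro u hu
          simp only [Finset.mem_union, Finset.mem_filter, Finset.mem_univ, true_and] at hu ⊢
          omega
  -- one growth step
  have hstep : ∀ α : ℕ, x ≤ α → α ≤ 2 * x → (B α : ℝ) * (1 + δ) < B (α + r) := by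
    intro α h1 h2
    have h3 := hcon α h1 h2
    have h4 : (B α : ℝ) < (Δ:ℝ)^r * A (α + r) := by
      exact_mod_cast h3
    have h5 : δ * (B α : ℝ) < A (α + r) := by
      have := mul_lt_mul_of_pos_left h4 hδpos
      calc δ * (B α : ℝ) < δ * ((Δ:ℝ)^r * A (α + r)) := this
        _ = (δ * (Δ:ℝ)^r) * A (α + r) := by ring
        _ = A (α + r) := by rw [hδmul]; ring
    have h6 : (B α : ℝ) + A (α + r) ≤ B (α + r) := by exact_mod_cast hsum α
    nlinarith
  -- v itself is in every ball
  have hB1 : ∀ d : ℕ, 1 ≤ B d := by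
    intro d
    apply Finset.card_pos.mpr
    exact ⟨v, by simp [SimpleGraph.dist_self]⟩
  -- iterate
  have hind : ∀ k : ℕ, k ≤ x / r → (1 + δ) ^ k ≤ (B (x + k * r) : ℝ) := by
    intro k
    induction k with
    | zero => intro _; simpa using (by exact_mod_cast hB1 x : (1:ℝ) ≤ B x)
    | succ k ih =>
      intro hk
      have hk' : k ≤ x / r := by omega
      have hkr : k * r ≤ x := le_trans (Nat.mul_le_mul_right r hk') (Nat.div_mul_le_self x r)
      have h1 : x ≤ x + k * r := by omega
      have h2 : x + k * r ≤ 2 * x := by omega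
      have := hstep (x + k * r) h1 h2
      have hih := ih hk'
      refine le_of_lt ?_
      calc (1 + δ) ^ (k + 1) = (1 + δ) ^ k * (1 + δ) := by ring
        _ ≤ (B (x + k * r) : ℝ) * (1 + δ) := by
            apply mul_le_mul_of_nonneg_right hih (by linarith)
        _ < B (x + k * r + r) := this
        _ = B (x + (k + 1) * r) := by ring_nf
  set K : ℕ := x / r with hK
  have hKr : K * r ≤ x := Nat.div_mul_le_self x r
  have hlow : (1 + δ) ^ K ≤ (B (x + K * r) : ℝ) := hind K le_rfl
  have hhigh : (B (x + K * r) : ℝ) ≤ (2:ℝ) ^ (c * ((x : ℝ) + (K : ℝ) * r)) := hgrowth K hKr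
  -- rewrite the RHS
  have ha : (0:ℝ) < 1 + δ := by linarith
  have hrw : (2:ℝ) ^ (c * ((x : ℝ) + (K : ℝ) * r))
      = (1 + δ) ^ (((x : ℝ) + (K : ℝ) * r) / (3 * r)) := by
    rw [hc, div_mul_eq_mul_div, mul_div_assoc, Real.rpow_mul (by norm_num)]
    rw [Real.rpow_logb (by norm_num) (by norm_num) ha]
  -- exponent comparison
  have hxnat : x < K * r + r := by
    have h2 := Nat.mod_lt x hr
    calc x = r * K + x % r := by rw [hK]; exact (Nat.div_add_mod x r).symm
      _ < r * K + r := Nat.add_lt_add_left h2 _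
      _ = K * r + r := by ring
  have hxK : (x:ℝ) < (K:ℝ) * r + r := by exact_mod_cast hxnat
  have hrR : (1:ℝ) ≤ r := by exact_mod_cast hr
  have hxR : (4:ℝ) * r ≤ x := by exact_mod_cast hx
  have hexp : ((x : ℝ) + (K : ℝ) * r) / (3 * r) < K := by
    rw [div_lt_iff₀ (by positivity)]
    nlinarith
  have hfin : (1 + δ) ^ (((x : ℝ) + (K : ℝ) * r) / (3 * r)) < (1 + δ) ^ (K : ℝ) := by
    exact Real.rpow_lt_rpow_of_exponent_lt h1δ hexp
  rw [← Real.rpow_natCast (1 + δ) K] at hlow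
  rw [hrw] at hhigh
  linarith
end

section
/- Let G be a graph, v a vertex, and suppose that for every α in {x, …, 2x} we have |N_{≤α}(v)| < Δ^r · |N_{=α+r}(v)|. Then for every integer k with 0 ≤ kr ≤ x, it holds that |N_{≤x+kr}(v)| ≥ (1 + 1/Δ^r)^k · |N_{≤x}(v)|. -/
/-- If for every α ∈ [x, 2x], |N_{≤α}(v)| < Δ^r · |N_{=α+r}(v)|,
then for every k with kr ≤ x, |N_{≤x+kr}(v)| ≥ (1 + 1/Δ^r)^k · |N_{≤x}(v)|. -/
theorem stmt_1 {V : Type*} [Fintype V] [DecidableEq V]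
    (G : SimpleGraph V) [DecidableRel G.Adj] (Δ r x : ℕ)
    (hr : 0 < r) (hx : 0 < x)
    (hmax : ∀ v, G.degree v ≤ Δ)
    (v : V)
    (hyp : ∀ α, x ≤ α → α ≤ 2 * x →
      (Finset.univ.filter (fun u => G.dist v u ≤ α)).card
        < Δ ^ r * (Finset.univ.filter (fun u => G.dist v u = α + r)).card) :
    ∀ k : ℕ, k * r ≤ x →
      (1 + 1 / (Δ : ℝ) ^ r) ^ k
          * ((Finset.univ.filter (fun u => G.dist v u ≤ x)).card : ℝ)
        ≤ ((Finset.univ.filter (fun u => G.dist v u ≤ x + k * r)).card : ℝ) := by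
  have hΔ : 0 < Δ := by
    by_contra h
    push_neg at h
    interval_cases Δ
    have := hyp x le_rfl (by omega)
    rw [Nat.zero_pow hr] at this; omega
  have hΔr : (0:ℝ) < (Δ:ℝ) ^ r := by positivity
  intro k hk
  induction k with
  | zero => simp
  | succ k ih =>
    have hk' : k * r ≤ x := le_trans (Nat.mul_le_mul_right r (Nat.le_succ k)) hk
    have hstep := hyp (x + k * r) (Nat.le_add_right _ _) (by omega)
    set B := Finset.univ.filter (fun u => G.dist v u ≤ x + k * r) with hB
    set S := Finset.univ.filter (fun u => G.dist v u = x + k * r + r) with hS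
    have hdisj : Disjoint B S := by
      rw [Finset.disjoint_left]
      intro u hu hu'
      simp only [hB, hS, Finset.mem_filter] at hu hu'
      omega
    have hsub : B ∪ S ⊆ Finset.univ.filter (fun u => G.dist v u ≤ x + (k + 1) * r) := by
      intro u hu
      rcases Finset.mem_union.mp hu with h | h <;>
        simp only [hB, hS, Finset.mem_filter] at h <;>
        simp only [Finset.mem_filter, Finset.mem_univ, true_and]
      · calc G.dist v u ≤ x + k * r := h.2
          _ ≤ x + (k + 1) * r := by nlinarith
      · have : x + (k + 1) * r = x + k * r + r := by ring
        omega
    have hcard : B.card + S.card ≤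
        (Finset.univ.filter (fun u => G.dist v u ≤ x + (k + 1) * r)).card := by
      rw [← Finset.card_union_of_disjoint hdisj]
      exact Finset.card_le_card hsub
    have hSr : (B.card : ℝ) < (Δ:ℝ) ^ r * S.card := by
      exact_mod_cast hstep
    have hcardr : (B.card : ℝ) + S.card ≤
        ((Finset.univ.filter (fun u => G.dist v u ≤ x + (k + 1) * r)).card : ℝ) := by
      exact_mod_cast hcard
    have hIH := ih hk'
    have hpos : (0:ℝ) ≤ (1 + 1 / (Δ:ℝ) ^ r) ^ k *
        ((Finset.univ.filter (fun u => G.dist v u ≤ x)).card : ℝ) := by positivity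
    calc (1 + 1 / (Δ:ℝ) ^ r) ^ (k + 1) *
          ((Finset.univ.filter (fun u => G.dist v u ≤ x)).card : ℝ)
        = (1 + 1 / (Δ:ℝ) ^ r) * ((1 + 1 / (Δ:ℝ) ^ r) ^ k *
          ((Finset.univ.filter (fun u => G.dist v u ≤ x)).card : ℝ)) := by ring
      _ ≤ (1 + 1 / (Δ:ℝ) ^ r) * (B.card : ℝ) := by
          apply mul_le_mul_of_nonneg_left hIH
          positivity
      _ ≤ (B.card : ℝ) + S.card := by
          have : (B.card : ℝ) / (Δ:ℝ) ^ r ≤ (S.card : ℝ) := by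
            rw [div_le_iff₀ hΔr]
            nlinarith
          have h2 : (1 + 1 / (Δ:ℝ) ^ r) * (B.card : ℝ)
              = (B.card : ℝ) + (B.card : ℝ) / (Δ:ℝ) ^ r := by
            field_simp
          linarith
      _ ≤ _ := hcardr
end

section
/- Let G be a graph with a proper 3-coloring φ: V → {1,2,3} that is greedy, meaning every vertex of color i has, for each color j < i, at least one neighbor of color j. Let C be a connected component of the subgraph induced by vertices of colors 2 and 3, and suppose C has diameter at least 2Δ, where Δ is the maximum degree of G. Then for every vertex v of C, either (1) there is a vertex w of C with dist_C(v,w) ≤ Δ having at least two neighbors of color 1 in G, or (2) there are adjacent vertices x, y of C with dist_C(v,x) ≤ Δ and dist_C(v,y) ≤ Δ that have no common neighbor of color 1 in G. -/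
private lemma walk_length_drop {V : Type*} {G : SimpleGraph V} :
    ∀ {u v : V} (p : G.Walk u v) (n : ℕ), (p.drop n).length = p.length - n := by
  intro u v p
  induction p with
  | nil => intro n; cases n <;> simp [SimpleGraph.Walk.drop]
  | cons h q ih =>
    intro n
    cases n with
    | zero => simp [SimpleGraph.Walk.drop]
    | succ n => simpa [SimpleGraph.Walk.drop] using ih n

/-- In a greedy proper 3-coloring, for every vertex v of a component C
of the color-{2,3} induced subgraph of diameter ≥ 2Δ, either some w within distance
Δ of v in C has two neighbors of color 1 in G, or there are adjacent x, y within
distance Δ of v in C with no common neighbor of color 1 in G. -/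
theorem stmt_7 {V : Type*} [Fintype V] [DecidableEq V]
    (G : SimpleGraph V) [DecidableRel G.Adj] (Δ : ℕ)
    (hΔ : ∀ v, G.degree v ≤ Δ)
    (φ : V → ℕ)
    (hrange : ∀ v, φ v = 1 ∨ φ v = 2 ∨ φ v = 3)
    (hproper : ∀ u v, G.Adj u v → φ u ≠ φ v)
    (hgreedy : ∀ v j, 1 ≤ j → j < φ v → ∃ u, G.Adj v u ∧ φ u = j)
    (S : Set V) (hS : S = {v | φ v = 2 ∨ φ v = 3})
    (H : SimpleGraph S) (hH : H = G.induce S)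
    (v : S)
    (hdiam : ∃ a b : S, H.Reachable v a ∧ H.Reachable v b ∧ 2 * Δ ≤ H.dist a b) :
    (∃ w : S, H.Reachable v w ∧ H.dist v w ≤ Δ ∧
        ∃ u₁ u₂ : V, u₁ ≠ u₂ ∧ G.Adj (↑w) u₁ ∧ G.Adj (↑w) u₂ ∧ φ u₁ = 1 ∧ φ u₂ = 1) ∨
    (∃ x y : S, H.Adj x y ∧
        H.Reachable v x ∧ H.dist v x ≤ Δ ∧
        H.Reachable v y ∧ H.dist v y ≤ Δ ∧
        ¬ ∃ z : V, G.Adj (↑x) z ∧ G.Adj (↑y) z ∧ φ z = 1) := by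
  by_contra hcon
  push_neg at hcon
  obtain ⟨h1, h2⟩ := hcon
  -- find a vertex at distance ≥ Δ from v
  obtain ⟨a, b, hva, hvb, hab⟩ := hdiam
  obtain ⟨pa, hpa⟩ := hva.exists_walk_length_eq_dist
  obtain ⟨pb, hpb⟩ := hvb.exists_walk_length_eq_dist
  have htri : H.dist a b ≤ H.dist v a + H.dist v b := by
    calc H.dist a b ≤ (pa.reverse.append pb).length := SimpleGraph.dist_le _
    _ = H.dist v a + H.dist v b := by
        simp [SimpleGraph.Walk.length_append, hpa, hpb]
  have hone : Δ ≤ H.dist v a ∨ Δ ≤ H.dist v b := by omega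
  obtain ⟨c, hvc, hΔc⟩ : ∃ c : S, H.Reachable v c ∧ Δ ≤ H.dist v c := by
    rcases hone with h | h
    · exact ⟨a, hva, h⟩
    · exact ⟨b, hvb, h⟩
  obtain ⟨p, hp⟩ := hvc.exists_walk_length_eq_dist
  have hΔlen : Δ ≤ p.length := by omega
  -- distance facts along the walk
  have hdle : ∀ k, k ≤ p.length → H.Reachable v (p.getVert k) ∧ H.dist v (p.getVert k) ≤ k := by
    intro k hk
    have hq : p.reverse.getVert (p.length - k) = p.getVert k := by
      rw [SimpleGraph.Walk.getVert_reverse]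
      congr 1
      omega
    set q := ((p.reverse.drop (p.length - k)).copy hq rfl).reverse with hqdef
    have hql : q.length = k := by
      simp [hqdef, walk_length_drop]
      omega
    have hd := SimpleGraph.dist_le q
    exact ⟨⟨q⟩, by omega⟩
  have hdge : ∀ k, k ≤ p.length → k ≤ H.dist v (p.getVert k) := by
    intro k hk
    have h3 : H.dist v c ≤ H.dist v (p.getVert k) + (p.drop k).length := by
      obtain ⟨r, hr⟩ := (hdle k hk).1.exists_walk_length_eq_dist
      calc H.dist v c ≤ (r.append (p.drop k)).length := SimpleGraph.dist_le _
      _ = _ := by simp [SimpleGraph.Walk.length_append, hr]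
    rw [walk_length_drop] at h3
    omega
  have hdist : ∀ k, k ≤ p.length → H.dist v (p.getVert k) = k :=
    fun k hk => le_antisymm (hdle k hk).2 (hdge k hk)
  -- each vertex of S has color 2 or 3, hence a color-1 neighbor
  have hcol : ∀ w : S, 1 < φ ↑w := by
    intro w
    have hw : (↑w : V) ∈ {v | φ v = 2 ∨ φ v = 3} := by rw [← hS]; exact w.2
    rcases hw with h | h <;> omega
  obtain ⟨u₀, hu₀adj, hu₀col⟩ := hgreedy ↑v 1 le_rfl (hcol v)
  -- u₀ is adjacent to every vertex on the geodesic up to distance Δ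
  have key : ∀ k, k ≤ Δ → G.Adj ↑(p.getVert k) u₀ := by
    intro k hk
    induction k with
    | zero => simpa [SimpleGraph.Walk.getVert_zero] using hu₀adj
    | succ k ih =>
      have ihk := ih (by omega)
      have hklen : k < p.length := by omega
      have hadjH : H.Adj (p.getVert k) (p.getVert (k + 1)) :=
        p.adj_getVert_succ hklen
      have hrk := (hdle k (by omega)).1
      have hrk1 := (hdle (k+1) (by omega)).1
      have hdk : H.dist v (p.getVert k) ≤ Δ := by rw [hdist k (by omega)]; omega
      have hdk1 : H.dist v (p.getVert (k+1)) ≤ Δ := by rw [hdist (k+1) (by omega)]; omega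
      obtain ⟨z, hz1, hz2, hz3⟩ := h2 _ _ hadjH hrk hdk hrk1 hdk1
      have hzu : z = u₀ := by
        by_contra hne
        exact h1 _ hrk hdk z u₀ hne hz1 ihk hz3 hu₀col
      rwa [hzu] at hz2
  -- Δ+1 distinct neighbors of u₀, contradiction with degree bound
  have hinj : Set.InjOn (fun k => (↑(p.getVert k) : V)) ↑(Finset.range (Δ + 1)) := by
    intro i hi j hj hij
    simp only [Finset.coe_range, Set.mem_Iio] at hi hj
    have : p.getVert i = p.getVert j := Subtype.coe_injective hij
    have h1 := hdist i (by omega)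
    have h2 := hdist j (by omega)
    rw [this] at h1
    omega
  have hmaps : ∀ k ∈ Finset.range (Δ + 1), (↑(p.getVert k) : V) ∈ G.neighborFinset u₀ := by
    intro k hk
    rw [Finset.mem_range] at hk
    rw [SimpleGraph.mem_neighborFinset]
    exact (key k (by omega)).symm
  have hcard := Finset.card_le_card_of_injOn _ hmaps hinj
  rw [Finset.card_range] at hcard
  have := hΔ u₀
  rw [SimpleGraph.degree] at this
  omega
end

section
/- (Symmetric Lovász Local Lemma) Let E₁, …, E_k be events in a probability space such that each E_i occurs with probability at most p and each E_i is mutually independent of all but at most d of the other events. If e·p·(d+1) ≤ 1 (e the base of natural logarithm), then the probability that none of the events occur is positive. -/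
open MeasureTheory

lemma lll_real (d : ℕ) :
    1 ≤ ((1 - Real.exp (-(1/(d+1)))) * (Real.exp (-(1/(d+1))))^d) * (Real.exp 1 * (d+1)) := by
  set t : ℝ := 1/(d+1) with ht
  have hd1 : (0:ℝ) < (d:ℝ) + 1 := by positivity
  have htpos : 0 < t := by positivity
  have hinv : Real.exp (-t) * Real.exp t = 1 := by
    rw [← Real.exp_add]; simp
  have h1 : t * Real.exp (-t) ≤ 1 - Real.exp (-t) := by
    have h := Real.add_one_le_exp t
    nlinarith [Real.exp_pos (-t)]
  have hpow : (Real.exp (-t))^d = Real.exp (-(t*d)) := by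
    rw [← Real.exp_nat_mul]; ring_nf
  have htd : t * ((d:ℝ)+1) = 1 := by
    rw [ht]; field_simp
  have key : (Real.exp (-t))^d * Real.exp (-t) * Real.exp 1 = 1 := by
    rw [hpow, ← Real.exp_add, ← Real.exp_add]
    rw [show -(t*d) + -t + 1 = 1 - t*((d:ℝ)+1) by ring, htd]
    simp
  have h2 : t * Real.exp (-t) * (Real.exp (-t))^d ≤ (1 - Real.exp (-t)) * (Real.exp (-t))^d :=
    mul_le_mul_of_nonneg_right h1 (by positivity)
  have h3 := mul_le_mul_of_nonneg_right h2 (le_of_lt (mul_pos (Real.exp_pos 1) hd1))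
  calc (1:ℝ) = t * ((Real.exp (-t))^d * Real.exp (-t) * Real.exp 1) * ((d:ℝ)+1) := by
        rw [key]; rw [mul_one]; exact htd.symm
    _ ≤ ((1 - Real.exp (-t)) * (Real.exp (-t))^d) * (Real.exp 1 * ((d:ℝ)+1)) := by
        nlinarith [h3]

lemma lll_key {Ω : Type*} [MeasurableSpace Ω] (μ : Measure Ω) [IsProbabilityMeasure μ]
    {k : ℕ} (E : Fin k → Set Ω) (hmeas : ∀ i, MeasurableSet (E i))
    (Γ : Fin k → Finset (Fin k)) (p q : ENNReal) (d : ℕ)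
    (hp : ∀ i, μ (E i) ≤ p)
    (hΓcard : ∀ i, (Γ i).card ≤ d)
    (hindep : ∀ i, ∀ J : Finset (Fin k), (∀ j ∈ J, j ≠ i ∧ j ∉ Γ i) →
      μ (E i ∩ ⋂ j ∈ J, (E j)ᶜ) = μ (E i) * μ (⋂ j ∈ J, (E j)ᶜ))
    (hq1 : q ≤ 1) (hpq : p ≤ q * (1-q)^d) :
    ∀ n (S : Finset (Fin k)), S.card ≤ n → ∀ i,
      μ (E i ∩ ⋂ j ∈ S, (E j)ᶜ) ≤ q * μ (⋂ j ∈ S, (E j)ᶜ) := by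
  -- abbreviation and basic facts
  set C : Finset (Fin k) → Set Ω := fun S => ⋂ j ∈ S, (E j)ᶜ with hC
  have hCmeas : ∀ S, MeasurableSet (C S) := fun S =>
    MeasurableSet.biInter (S : Set (Fin k)).to_countable (fun j _ => (hmeas j).compl)
  have hCmono : ∀ {S T : Finset (Fin k)}, S ⊆ T → C T ⊆ C S := by
    intro S T hST
    exact Set.biInter_subset_biInter_left (fun j hj => hST hj)
  have hsub : ∀ (A : Set Ω) (j : Fin k), MeasurableSet A →
      μ ((E j)ᶜ ∩ A) = μ A - μ (E j ∩ A) := by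
    intro A j hA
    have h := measure_inter_add_diff (μ := μ) A (hmeas j)
    have hfin : μ (A ∩ E j) ≠ ⊤ := measure_ne_top μ _
    have : μ (A \ E j) = μ A - μ (A ∩ E j) := by
      rw [← h]; rw [ENNReal.add_sub_cancel_left hfin]
    rw [Set.inter_comm, ← Set.diff_eq, this, Set.inter_comm]
  intro n
  induction n using Nat.strong_induction_on with
  | _ n ih =>
    intro S hS i
    by_cases hiS : i ∈ S
    · have hempty : E i ∩ C S = ∅ := by
        apply Set.eq_empty_of_forall_notMem
        intro ω hω
        exact (Set.mem_iInter₂.mp hω.2 i hiS) hω.1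
      rw [hempty]; simp
    · set S₁ : Finset (Fin k) := S ∩ Γ i with hS₁
      set S₂ : Finset (Fin k) := S \ Γ i with hS₂
      have hS21 : S₂ ∪ S₁ = S := by
        rw [hS₁, hS₂]; exact Finset.sdiff_union_inter S (Γ i)
      have hS2S : S₂ ⊆ S := Finset.sdiff_subset
      have hS1S : S₁ ⊆ S := Finset.inter_subset_left
      -- peeling lemma
      have peel : ∀ T : Finset (Fin k), T ⊆ S₁ →
          (1-q)^T.card * μ (C S₂) ≤ μ (C (S₂ ∪ T)) := by
        intro T
        induction T using Finset.induction with
        | empty => intro _; simp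
        | @insert j T hjT ihT =>
          intro hTsub
          have hT1 : T ⊆ S₁ := fun x hx => hTsub (Finset.mem_insert_of_mem hx)
          have hj1 : j ∈ S₁ := hTsub (Finset.mem_insert_self j T)
          have hjΓ : j ∈ Γ i := (Finset.mem_inter.mp hj1).2
          have hjS : j ∈ S := (Finset.mem_inter.mp hj1).1
          have hjnot : j ∉ S₂ ∪ T := by
            rw [Finset.mem_union]
            rintro (h | h)
            · exact (Finset.mem_sdiff.mp h).2 hjΓ
            · exact hjT h
          have hsubS : S₂ ∪ T ⊆ S := Finset.union_subset hS2S (hT1.trans hS1S)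
          have hcard : (S₂ ∪ T).card < n := by
            have : S₂ ∪ T ⊂ S := Finset.ssubset_iff_of_subset hsubS |>.mpr ⟨j, hjS, hjnot⟩
            exact lt_of_lt_of_le (Finset.card_lt_card this) hS
          have hkey := ih _ hcard (S₂ ∪ T) le_rfl j
          have heq : C (S₂ ∪ insert j T) = (E j)ᶜ ∩ C (S₂ ∪ T) := by
            rw [Finset.union_insert, hC]
            exact Finset.set_biInter_insert _ _ _
          rw [heq, hsub _ j (hCmeas _)]
          have hfin : μ (C (S₂ ∪ T)) ≠ ⊤ := measure_ne_top μ _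
          have step : (1-q) * μ (C (S₂ ∪ T)) ≤ μ (C (S₂ ∪ T)) - μ (E j ∩ C (S₂ ∪ T)) := by
            have : (1-q) * μ (C (S₂ ∪ T)) = μ (C (S₂ ∪ T)) - q * μ (C (S₂ ∪ T)) := by
              rw [ENNReal.sub_mul (fun _ _ => hfin), one_mul]
            rw [this]
            exact tsub_le_tsub_left hkey _
          calc (1-q)^(insert j T).card * μ (C S₂)
              = (1-q) * ((1-q)^T.card * μ (C S₂)) := by
                rw [Finset.card_insert_of_notMem hjT, pow_succ]; ring
            _ ≤ (1-q) * μ (C (S₂ ∪ T)) := mul_le_mul_right (ihT hT1) _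
            _ ≤ μ (C (S₂ ∪ T)) - μ (E j ∩ C (S₂ ∪ T)) := step
      -- independence over S₂
      have hind : μ (E i ∩ C S₂) = μ (E i) * μ (C S₂) := by
        apply hindep i S₂
        intro j hj
        rcases Finset.mem_sdiff.mp hj with ⟨hjS, hjΓ⟩
        exact ⟨fun h => hiS (h ▸ hjS), hjΓ⟩
      have hcard1 : S₁.card ≤ d := le_trans (Finset.card_le_card Finset.inter_subset_right) (hΓcard i)
      have hpowle : (1-q)^d ≤ (1-q)^S₁.card :=
        pow_le_pow_of_le_one zero_le tsub_le_self hcard1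
      calc μ (E i ∩ C S)
          ≤ μ (E i ∩ C S₂) := measure_mono (Set.inter_subset_inter_right _ (hCmono hS2S))
        _ = μ (E i) * μ (C S₂) := hind
        _ ≤ p * μ (C S₂) := mul_le_mul_left (hp i) _
        _ ≤ (q * (1-q)^d) * μ (C S₂) := mul_le_mul_left hpq _
        _ ≤ (q * (1-q)^S₁.card) * μ (C S₂) := mul_le_mul_left (mul_le_mul_right hpowle q) _
        _ = q * ((1-q)^S₁.card * μ (C S₂)) := by ring
        _ ≤ q * μ (C (S₂ ∪ S₁)) := mul_le_mul_right (peel S₁ le_rfl) q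
        _ = q * μ (C S) := by rw [hS21]

/-- Symmetric Lovász Local Lemma: if each event has probability at
most p, each event is mutually independent of all but at most d of the others, and
e·p·(d+1) ≤ 1, then with positive probability none of the events occurs. -/
theorem stmt_14 {Ω : Type*} [MeasurableSpace Ω]
    (μ : Measure Ω) [IsProbabilityMeasure μ]
    (k d : ℕ) (p : ENNReal) (E : Fin k → Set Ω)
    (hmeas : ∀ i, MeasurableSet (E i))
    (hp : ∀ i, μ (E i) ≤ p)
    (Γ : Fin k → Finset (Fin k))
    (hΓcard : ∀ i, (Γ i).card ≤ d)
    (hΓi : ∀ i, i ∉ Γ i)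
    (hindep : ∀ i, ∀ J : Finset (Fin k), (∀ j ∈ J, j ≠ i ∧ j ∉ Γ i) →
      μ (E i ∩ ⋂ j ∈ J, (E j)ᶜ) = μ (E i) * μ (⋂ j ∈ J, (E j)ᶜ))
    (hlll : ENNReal.ofReal (Real.exp 1) * p * ((d : ENNReal) + 1) ≤ 1) :
    0 < μ (⋂ i, (E i)ᶜ) := by
  -- choose x and set q = ofReal x
  set x : ℝ := 1 - Real.exp (-(1/(d+1))) with hx
  have hexp1 : Real.exp (-(1/(d+1))) < 1 := by
    apply Real.exp_lt_one_iff.mpr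
    have : (0:ℝ) < 1/((d:ℝ)+1) := by positivity
    linarith
  have hexp0 : 0 < Real.exp (-(1/(d+1))) := Real.exp_pos _
  have hx0 : 0 < x := by simp only [hx]; linarith
  have hx1 : x < 1 := by simp only [hx]; linarith
  set q : ENNReal := ENNReal.ofReal x with hq
  have hq1 : q ≤ 1 := by
    rw [hq, ← ENNReal.ofReal_one]
    exact ENNReal.ofReal_le_ofReal hx1.le
  have h1q : (1:ENNReal) - q = ENNReal.ofReal (1 - x) := by
    rw [hq, ← ENNReal.ofReal_one, ← ENNReal.ofReal_sub _ hx0.le]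
  have h1x : 1 - x = Real.exp (-(1/(d+1))) := by rw [hx]; ring
  -- the main hypothesis gives p ≤ q * (1-q)^d
  have hc : (ENNReal.ofReal (Real.exp 1) * ((d:ENNReal)+1)) ≠ 0 := by
    apply mul_ne_zero
    · simp [ENNReal.ofReal_eq_zero, not_le, Real.exp_pos]
    · exact fun h => by simp at h
  have hcfin : (ENNReal.ofReal (Real.exp 1) * ((d:ENNReal)+1)) ≠ ⊤ := by
    apply ENNReal.mul_ne_top ENNReal.ofReal_ne_top
    simp [ENNReal.add_eq_top]
  have hd1 : ((d:ENNReal)+1) = ENNReal.ofReal ((d:ℝ)+1) := by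
    rw [ENNReal.ofReal_add (by positivity) zero_le_one]
    simp [ENNReal.ofReal_natCast]
  have hqd : q * (1-q)^d = ENNReal.ofReal (x * (1-x)^d) := by
    rw [ENNReal.ofReal_mul hx0.le, ENNReal.ofReal_pow (by linarith), h1q, hq]
  have hone : 1 ≤ (q * (1-q)^d) * (ENNReal.ofReal (Real.exp 1) * ((d:ENNReal)+1)) := by
    rw [hqd, hd1, ← ENNReal.ofReal_mul (Real.exp_pos 1).le,
      ← ENNReal.ofReal_mul (mul_nonneg hx0.le (pow_nonneg (by linarith) d))]
    rw [← ENNReal.ofReal_one]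
    apply ENNReal.ofReal_le_ofReal
    have := lll_real d
    rw [← h1x] at this
    simpa [hx] using this
  have hpq : p ≤ q * (1-q)^d := by
    have hp1 : p * (ENNReal.ofReal (Real.exp 1) * ((d:ENNReal)+1)) ≤ 1 := by
      calc p * (ENNReal.ofReal (Real.exp 1) * ((d:ENNReal)+1))
          = ENNReal.ofReal (Real.exp 1) * p * ((d:ENNReal)+1) := by ring
        _ ≤ 1 := hlll
    have := ENNReal.div_le_div_right hp1 (ENNReal.ofReal (Real.exp 1) * ((d:ENNReal)+1))
    calc p = p * (ENNReal.ofReal (Real.exp 1) * ((d:ENNReal)+1)) /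
              (ENNReal.ofReal (Real.exp 1) * ((d:ENNReal)+1)) := by
          rw [mul_div_assoc, ENNReal.div_self hc hcfin, mul_one]
      _ ≤ 1 / (ENNReal.ofReal (Real.exp 1) * ((d:ENNReal)+1)) := this
      _ ≤ q * (1-q)^d := by
          rw [ENNReal.div_le_iff hc hcfin]
          exact hone
  have key := lll_key μ E hmeas Γ p q d hp hΓcard hindep hq1 hpq
  -- lower bound by induction
  have lower : ∀ S : Finset (Fin k), (1-q)^S.card ≤ μ (⋂ j ∈ S, (E j)ᶜ) := by
    intro S
    induction S using Finset.induction with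
    | empty => simp
    | @insert j S hjS ihS =>
      have heq : (⋂ l ∈ insert j S, (E l)ᶜ) = (E j)ᶜ ∩ ⋂ l ∈ S, (E l)ᶜ :=
        Finset.set_biInter_insert _ _ _
      have hmeasS : MeasurableSet (⋂ l ∈ S, (E l)ᶜ) :=
        MeasurableSet.biInter (S : Set (Fin k)).to_countable (fun l _ => (hmeas l).compl)
      have hsplit := measure_inter_add_diff (μ := μ) (⋂ l ∈ S, (E l)ᶜ) (hmeas j)
      have hfin : μ ((⋂ l ∈ S, (E l)ᶜ) ∩ E j) ≠ ⊤ := measure_ne_top μ _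
      have hdiff : μ ((⋂ l ∈ S, (E l)ᶜ) \ E j)
          = μ (⋂ l ∈ S, (E l)ᶜ) - μ ((⋂ l ∈ S, (E l)ᶜ) ∩ E j) := by
        rw [← hsplit, ENNReal.add_sub_cancel_left hfin]
      have heq2 : (E j)ᶜ ∩ (⋂ l ∈ S, (E l)ᶜ) = (⋂ l ∈ S, (E l)ᶜ) \ E j := by
        rw [Set.diff_eq, Set.inter_comm]
      have hkj : μ (E j ∩ ⋂ l ∈ S, (E l)ᶜ) ≤ q * μ (⋂ l ∈ S, (E l)ᶜ) :=
        key S.card S le_rfl j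
      have hfinS : μ (⋂ l ∈ S, (E l)ᶜ) ≠ ⊤ := measure_ne_top μ _
      calc (1-q)^(insert j S).card
          = (1-q) * (1-q)^S.card := by
            rw [Finset.card_insert_of_notMem hjS, pow_succ]; ring
        _ ≤ (1-q) * μ (⋂ l ∈ S, (E l)ᶜ) := mul_le_mul_right ihS _
        _ = μ (⋂ l ∈ S, (E l)ᶜ) - q * μ (⋂ l ∈ S, (E l)ᶜ) := by
            rw [ENNReal.sub_mul (fun _ _ => hfinS), one_mul]
        _ ≤ μ (⋂ l ∈ S, (E l)ᶜ) - μ ((⋂ l ∈ S, (E l)ᶜ) ∩ E j) := by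
            apply tsub_le_tsub_left
            rw [Set.inter_comm]; exact hkj
        _ = μ ((⋂ l ∈ S, (E l)ᶜ) \ E j) := hdiff.symm
        _ = μ (⋂ l ∈ insert j S, (E l)ᶜ) := by rw [heq, heq2]
  have hall : (⋂ i, (E i)ᶜ) = ⋂ j ∈ (Finset.univ : Finset (Fin k)), (E j)ᶜ := by
    simp
  rw [hall]
  have hpos : (0:ENNReal) < (1-q)^(Finset.univ : Finset (Fin k)).card := by
    apply ENNReal.pow_pos
    rw [h1q, h1x]
    simp [ENNReal.ofReal_pos, Real.exp_pos]
  exact lt_of_lt_of_le hpos (lower Finset.univ)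
end
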